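/- arXiv:1704.05486 — 3 statements merged into one kernel-verified Lean document; each statement's English description precedes it below -/
import Mathlib

section
/- For any nonempty compact set A ⊆ ℝⁿ, one has d(A) ≤ R(A) · c(A). -/
open MeasureTheory Metric
open scoped Pointwise

/-- The Hausdorff distance from a set `A ⊆ ℝⁿ` to its convex hull:
`d(A) = inf {r > 0 : conv(A) ⊆ A + r·B₂ⁿ}`, with `B₂ⁿ` the closed Euclidean unit
ball and the sum a Minkowski sum. -/
noncomputable def hausdorffDistToConv {n : ℕ} (A : Set (EuclideanSpace ℝ (Fin n))) : ℝ :=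
  sInf {r : ℝ | 0 < r ∧
    convexHull ℝ A ⊆ A + r • closedBall (0 : EuclideanSpace ℝ (Fin n)) 1}

/-- The circumradius of `A ⊆ ℝⁿ`: the radius of the smallest Euclidean ball
containing `A`. -/
noncomputable def circumradius {n : ℕ} (A : Set (EuclideanSpace ℝ (Fin n))) : ℝ :=
  sInf {r : ℝ | ∃ x, A ⊆ closedBall x r}

/-- **Schneider's non-convexity index**: `c(A) = inf {λ ≥ 0 : A + λ·conv(A) is convex}`,
where the sum is a Minkowski sum. -/
noncomputable def schneiderIndex {n : ℕ} (A : Set (EuclideanSpace ℝ (Fin n))) : ℝ :=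
  sInf {l : ℝ | 0 ≤ l ∧ Convex ℝ (A + l • convexHull ℝ A)}

/-- Schneider: `A + n • conv A` is convex (it equals `(n+1) • conv A`). -/
lemma schneider_aux_convex {n : ℕ} (A : Set (EuclideanSpace ℝ (Fin n))) (hne : A.Nonempty) :
    Convex ℝ (A + (n : ℝ) • convexHull ℝ A) := by
  classical
  rcases Nat.eq_zero_or_pos n with h0 | hn
  · subst h0
    exact (Set.subsingleton_of_subsingleton).convex
  · have hK : Convex ℝ (convexHull ℝ A) := convex_convexHull ℝ A
    have hnpos : (0 : ℝ) < n := by exact_mod_cast hn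
    have key : A + (n : ℝ) • convexHull ℝ A = ((1 : ℝ) + n) • convexHull ℝ A := by
      apply Set.Subset.antisymm
      · rw [hK.add_smul zero_le_one (by positivity), one_smul]
        exact Set.add_subset_add_right (subset_convexHull ℝ A)
      · rintro x ⟨z, hz, rfl⟩
        obtain ⟨ι, hfin, p, w, hrange, hind, hwpos, hwsum, hwz⟩ :=
          eq_pos_convex_span_of_mem_convexHull hz
        have hcard : (Fintype.card ι : ℝ) ≤ (n : ℝ) + 1 := by
          have h1 := hind.card_le_finrank_succ
          have h2 := Submodule.finrank_le (vectorSpan ℝ (Set.range p))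
          rw [finrank_euclideanSpace_fin] at h2
          exact_mod_cast h1.trans (by omega)
        have hne' : Nonempty ι := by
          by_contra h
          rw [not_nonempty_iff] at h
          simp [Finset.univ_eq_empty] at hwsum
        have hcard0 : (0 : ℝ) < Fintype.card ι := by
          exact_mod_cast Fintype.card_pos
        -- find an index with large weight
        have hj : ∃ j : ι, 1 ≤ ((n : ℝ) + 1) * w j := by
          by_contra h
          push_neg at h
          have hlt : ∀ i : ι, w i < 1 / (Fintype.card ι : ℝ) := by
            intro i
            have := h i
            have h1 : w i < 1 / ((n : ℝ) + 1) := by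
              rw [lt_div_iff₀ (by positivity)]
              linarith [h i]
            calc w i < 1 / ((n : ℝ) + 1) := h1
              _ ≤ 1 / (Fintype.card ι : ℝ) := by
                apply one_div_le_one_div_of_le hcard0 hcard
          have : (1 : ℝ) < 1 := by
            calc (1 : ℝ) = ∑ i : ι, w i := hwsum.symm
              _ < ∑ _i : ι, 1 / (Fintype.card ι : ℝ) :=
                Finset.sum_lt_sum_of_nonempty (by simp [Finset.univ_nonempty]) fun i _ => hlt i
              _ = 1 := by
                rw [Finset.sum_const, Finset.card_univ, nsmul_eq_mul]
                field_simp
          exact lt_irrefl _ this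
        obtain ⟨j, hj⟩ := hj
        -- the new weights
        set v : ι → ℝ := fun i => (((n : ℝ) + 1) * w i - if i = j then 1 else 0) / n with hv
        have hv0 : ∀ i, 0 ≤ v i := by
          intro i
          apply div_nonneg _ hnpos.le
          split_ifs with h
          · subst h; linarith
          · simp only [sub_zero]
            have := (hwpos i).le
            positivity
        have hv1 : ∑ i : ι, v i = 1 := by
          rw [hv]
          rw [← Finset.sum_div]
          rw [Finset.sum_sub_distrib, ← Finset.mul_sum, hwsum, Finset.sum_ite_eq' Finset.univ j
            (fun _ => (1 : ℝ))]
          simp only [Finset.mem_univ, if_pos]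
          field_simp
          ring
        set y : EuclideanSpace ℝ (Fin n) := ∑ i : ι, v i • p i with hy
        have hyK : y ∈ convexHull ℝ A :=
          mem_convexHull_of_exists_fintype v p hv0 hv1
            (fun i => hrange (Set.mem_range_self i)) rfl
        have hny : (n : ℝ) • y = ((1 : ℝ) + n) • z - p j := by
          rw [hy, Finset.smul_sum]
          have : ∀ i : ι, (n : ℝ) • (v i • p i)
              = (((n : ℝ) + 1) * w i) • p i - (if i = j then p i else 0) := by
            intro i
            rw [smul_smul, hv, mul_div_cancel₀ _ hnpos.ne', sub_smul, ite_smul, zero_smul, one_smul]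
          rw [Finset.sum_congr rfl fun i _ => this i, Finset.sum_sub_distrib,
            Finset.sum_ite_eq' Finset.univ j p]
          simp only [Finset.mem_univ, if_pos]
          congr 1
          rw [← hwz, Finset.smul_sum]
          apply Finset.sum_congr rfl
          intro i _
          rw [smul_smul]
          ring_nf
        have hmem : p j + (n : ℝ) • y ∈ A + (n : ℝ) • convexHull ℝ A :=
          Set.add_mem_add (hrange (Set.mem_range_self j)) (Set.smul_mem_smul_set hyK)
        have : p j + (n : ℝ) • y = ((1 : ℝ) + n) • z := by rw [hny]; abel
        rwa [this] at hmem
    rw [key]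
    exact hK.smul _

/-- Key distance estimate: if `A + l • conv A` is convex and `A ⊆ closedBall x r`,
then every point of `conv A` is within `l*r + ε` of `A`. -/
lemma schneider_key_dist {n : ℕ} {A : Set (EuclideanSpace ℝ (Fin n))} (hne : A.Nonempty)
    {l r : ℝ} (hl : 0 ≤ l) (hconv : Convex ℝ (A + l • convexHull ℝ A))
    {x : EuclideanSpace ℝ (Fin n)} (hr : A ⊆ closedBall x r)
    {ε : ℝ} (hε : 0 < ε) :
    ∀ z ∈ convexHull ℝ A, ∃ a ∈ A, dist z a ≤ l * r + ε := by
  intro z hz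
  set K := convexHull ℝ A with hKdef
  have hKne : K.Nonempty := hne.convexHull
  have hKconv : Convex ℝ K := convex_convexHull ℝ A
  have hKball : K ⊆ closedBall x r := convexHull_min hr (convex_closedBall x r)
  rcases eq_or_lt_of_le hl with rfl | hlpos
  · -- l = 0 : A is convex
    have hS : A + (0 : ℝ) • K = A := by
      rw [Set.zero_smul_set hKne, add_zero]
    rw [hS] at hconv
    refine ⟨z, ?_, by simp only [dist_self, zero_mul, zero_add]; exact hε.le⟩
    rwa [hKdef, hconv.convexHull_eq] at hz
  · -- l > 0 : use the projection onto the closure of K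
    set C := closure K with hC
    have hCconv : Convex ℝ C := hKconv.closure
    have hCne : C.Nonempty := hKne.closure
    have hCcomplete : IsComplete C := isClosed_closure.isComplete
    obtain ⟨v, hvC, hvmin⟩ := exists_norm_eq_iInf_of_complete_convex hCne hCcomplete hCconv x
    have hproj : ∀ w ∈ C, inner ℝ (x - v) (w - v) ≤ (0:ℝ) :=
      (norm_eq_iInf_iff_real_inner_le_zero hCconv hvC).mp hvmin
    have hCball : C ⊆ closedBall x r :=
      closure_minimal hKball isClosed_closedBall
    -- every point of K is within r of v
    have hdistv : ∀ w ∈ K, dist w v ≤ r := by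
      intro w hw
      have hwC : w ∈ C := subset_closure hw
      have h1 : inner ℝ (x - v) (w - v) ≤ (0:ℝ) := hproj w hwC
      have h2 : ‖w - v‖ ^ 2 ≤ ‖w - x‖ ^ 2 := by
        have hexp := norm_sub_sq_real (w - v) (x - v)
        rw [show (w - v) - (x - v) = w - x from by abel] at hexp
        have hsym : (inner ℝ (w - v) (x - v) : ℝ) = inner ℝ (x - v) (w - v) :=
          real_inner_comm _ _
        rw [hsym] at hexp
        nlinarith [sq_nonneg ‖x - v‖, hexp, h1]
      have h3 : ‖w - v‖ ≤ ‖w - x‖ :=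
        (pow_le_pow_iff_left₀ (norm_nonneg _) (norm_nonneg _) two_ne_zero).mp h2
      calc dist w v = ‖w - v‖ := dist_eq_norm _ _
        _ ≤ ‖w - x‖ := h3
        _ = dist w x := (dist_eq_norm _ _).symm
        _ ≤ r := hCball (subset_closure hw)
    -- pick v' ∈ K close to v
    obtain ⟨v', hv'K, hv'close⟩ : ∃ v' ∈ K, dist v' v < ε / l := by
      have := Metric.mem_closure_iff.mp hvC (ε / l) (by positivity)
      obtain ⟨v', hv'K, hd⟩ := this
      exact ⟨v', hv'K, by rwa [dist_comm]⟩
    -- K + l • K ⊆ A + l • K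
    have hsub : K + l • K ⊆ A + l • K := by
      have h1 : K + l • K = convexHull ℝ (A + l • A) := by
        rw [convexHull_add, convexHull_smul]
      have h2 : A + l • A ⊆ A + l • K :=
        Set.add_subset_add_left (Set.smul_set_mono (subset_convexHull ℝ A))
      rw [h1]
      calc convexHull ℝ (A + l • A) ⊆ convexHull ℝ (A + l • K) := convexHull_mono h2
        _ = A + l • K := hconv.convexHull_eq
    have hmem : z + l • v' ∈ A + l • K :=
      hsub (Set.add_mem_add hz (Set.smul_mem_smul_set hv'K))
    obtain ⟨a, ha, -, ⟨y, hy, rfl⟩, heq⟩ := hmem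
    refine ⟨a, ha, ?_⟩
    have hza : z - a = l • (y - v') := by
      have h' : a + l • y = z + l • v' := heq
      have hz' : z = a + l • y - l • v' := by rw [h']; abel
      rw [hz', smul_sub]; abel
    have hyv' : ‖y - v'‖ ≤ r + ε / l := by
      calc ‖y - v'‖ = dist y v' := (dist_eq_norm _ _).symm
        _ ≤ dist y v + dist v v' := dist_triangle _ _ _
        _ ≤ r + ε / l := by
          have h1 := hdistv y hy
          have h2 : dist v v' ≤ ε / l := by rw [dist_comm]; exact hv'close.le
          linarith
    calc dist z a = ‖z - a‖ := dist_eq_norm _ _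
      _ = ‖l • (y - v')‖ := by rw [hza]
      _ = l * ‖y - v'‖ := by rw [norm_smul, Real.norm_eq_abs, abs_of_nonneg hl]
      _ ≤ l * (r + ε / l) := mul_le_mul_of_nonneg_left hyv' hl
      _ = l * r + ε := by field_simp


/-- **Lemma 2.25 of Fradelizi–Madiman–Marsiglietti–Zvavitch**: for every nonempty
compact `A ⊆ ℝⁿ`, `d(A) ≤ R(A) · c(A)`. -/
theorem hausdorffDistToConv_le_circumradius_mul_schneiderIndex {n : ℕ}
    (A : Set (EuclideanSpace ℝ (Fin n))) (hne : A.Nonempty) (hcpt : IsCompact A) :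
    hausdorffDistToConv A ≤ circumradius A * schneiderIndex A := by
  set Dset := {r : ℝ | 0 < r ∧
    convexHull ℝ A ⊆ A + r • closedBall (0 : EuclideanSpace ℝ (Fin n)) 1} with hDset
  set Rset := {r : ℝ | ∃ x, A ⊆ closedBall x r} with hRset
  set Cset := {l : ℝ | 0 ≤ l ∧ Convex ℝ (A + l • convexHull ℝ A)} with hCset
  have hRne : Rset.Nonempty := by
    obtain ⟨r, hr⟩ := hcpt.isBounded.subset_closedBall 0
    exact ⟨r, 0, hr⟩
  have hRnonneg : ∀ r ∈ Rset, 0 ≤ r := by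
    rintro r ⟨x, hx⟩
    obtain ⟨a, ha⟩ := hne
    exact (dist_nonneg).trans (hx ha)
  have hRbdd : BddBelow Rset := ⟨0, hRnonneg⟩
  have hCmem : (n : ℝ) ∈ Cset := ⟨Nat.cast_nonneg n, schneider_aux_convex A hne⟩
  have hCbdd : BddBelow Cset := ⟨0, fun l hl => hl.1⟩
  have hDbdd : BddBelow Dset := ⟨0, fun r hr => hr.1.le⟩
  -- main estimate
  have main : ∀ l ∈ Cset, ∀ r ∈ Rset, hausdorffDistToConv A ≤ l * r := by
    rintro l ⟨hl0, hlconv⟩ r ⟨x, hx⟩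
    have hr0 : 0 ≤ r := hRnonneg r ⟨x, hx⟩
    apply le_of_forall_pos_le_add
    intro ε hε
    apply csInf_le hDbdd
    refine ⟨by positivity, ?_⟩
    intro z hz
    obtain ⟨a, ha, hd⟩ :=
      schneider_key_dist hne hl0 hlconv hx (half_pos hε) z hz
    rw [Set.mem_add]
    refine ⟨a, ha, z - a, ?_, by abel⟩
    rw [Set.mem_smul_set_iff_inv_smul_mem₀ (by positivity : (l * r + ε) ≠ 0),
      mem_closedBall_zero_iff, norm_smul, Real.norm_eq_abs,
      abs_of_nonneg (by positivity : (0:ℝ) ≤ (l * r + ε)⁻¹)]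
    rw [inv_mul_le_iff₀ (by positivity), mul_one]
    calc ‖z - a‖ = dist z a := (dist_eq_norm _ _).symm
      _ ≤ l * r + ε / 2 := hd
      _ ≤ l * r + ε := by linarith
  -- first inf
  have step1 : ∀ l ∈ Cset, hausdorffDistToConv A ≤ l * circumradius A := by
    intro l hl
    rcases eq_or_lt_of_le hl.1 with rfl | hlpos
    · obtain ⟨r, hr⟩ := hRne
      have := main 0 hl r hr
      simpa using this
    · have h1 : ∀ r ∈ Rset, hausdorffDistToConv A / l ≤ r := by
        intro r hr
        rw [div_le_iff₀ hlpos]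
        calc hausdorffDistToConv A ≤ l * r := main l hl r hr
          _ = r * l := mul_comm _ _
      have h2 : hausdorffDistToConv A / l ≤ circumradius A := le_csInf hRne h1
      rw [div_le_iff₀ hlpos] at h2
      calc hausdorffDistToConv A ≤ circumradius A * l := h2
        _ = l * circumradius A := mul_comm _ _
  -- second inf
  have hR0 : 0 ≤ circumradius A := Real.sInf_nonneg hRnonneg
  rcases eq_or_lt_of_le hR0 with hR | hRpos
  · have := step1 (n : ℝ) hCmem
    rw [← hR] at this ⊢
    simpa using this
  · have h1 : ∀ l ∈ Cset, hausdorffDistToConv A / circumradius A ≤ l := by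
      intro l hl
      rw [div_le_iff₀ hRpos]
      calc hausdorffDistToConv A ≤ l * circumradius A := step1 l hl
        _ = l * circumradius A := rfl
    have h2 : hausdorffDistToConv A / circumradius A ≤ schneiderIndex A :=
      le_csInf ⟨(n : ℝ), hCmem⟩ h1
    rw [div_le_iff₀ hRpos] at h2
    calc hausdorffDistToConv A ≤ schneiderIndex A * circumradius A := h2
      _ = circumradius A * schneiderIndex A := mul_comm _ _
end

section
/- Let K be a compact convex body in ℝⁿ containing 0 in its interior, and let A, B be nonempty compact sets in ℝⁿ. Then d^{(K)}(A + B) ≤ d^{(K)}(A) + d^{(K)}(B), where A + B is the Minkowski sum. -/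
open MeasureTheory
open scoped Pointwise

/-- The Hausdorff distance from a set `A ⊆ ℝⁿ` to its convex hull, measured with
respect to the (possibly nonsymmetric) norm with unit ball `K`:
`d^{(K)}(A) = inf {r > 0 : conv(A) ⊆ A + r·K}` (Minkowski sum). -/
noncomputable def distToConv {n : ℕ} (K A : Set (EuclideanSpace ℝ (Fin n))) : ℝ :=
  sInf {r : ℝ | 0 < r ∧ convexHull ℝ A ⊆ A + r • K}

lemma distToConv_set_nonempty {n : ℕ} (K : Set (EuclideanSpace ℝ (Fin n)))
    (hK0 : (0 : EuclideanSpace ℝ (Fin n)) ∈ interior K)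
    (A : Set (EuclideanSpace ℝ (Fin n))) (hA : A.Nonempty) (hcA : IsCompact A) :
    {r : ℝ | 0 < r ∧ convexHull ℝ A ⊆ A + r • K}.Nonempty := by
  obtain ⟨ε, hε, hball⟩ := Metric.mem_nhds_iff.mp (mem_interior_iff_mem_nhds.mp hK0)
  obtain ⟨a, ha⟩ := hA
  have hconv : Bornology.IsBounded (convexHull ℝ A) :=
    (totallyBounded_convexHull.mpr hcA.totallyBounded).isBounded
  obtain ⟨R0, hR0⟩ := hconv.subset_ball 0
  set R : ℝ := max R0 1 + ‖a‖ with hR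
  have hRpos : (0:ℝ) < R := by positivity
  refine ⟨R / ε, div_pos hRpos hε, ?_⟩
  intro x hx
  have hxball : x ∈ Metric.ball (0 : EuclideanSpace ℝ (Fin n)) R0 := hR0 hx
  have hxnorm : ‖x‖ < R0 := by simpa using hxball
  have hxa : ‖x - a‖ < R := by
    calc ‖x - a‖ ≤ ‖x‖ + ‖a‖ := norm_sub_le _ _
    _ < R := by
      have : R0 ≤ max R0 1 := le_max_left _ _
      linarith
  have hrpos : (0:ℝ) < R / ε := div_pos hRpos hε
  refine ⟨a, ha, x - a, ?_, by module⟩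
  rw [Set.mem_smul_set_iff_inv_smul_mem₀ (ne_of_gt hrpos)]
  apply hball
  simp only [Metric.mem_ball, dist_zero_right, norm_smul, norm_inv, Real.norm_eq_abs,
    abs_of_pos hrpos]
  rw [inv_mul_lt_iff₀ hrpos]
  have heq : R / ε * ε = R := div_mul_cancel₀ _ hε.ne'
  rw [heq]; exact hxa

/-- **Subadditivity of the Hausdorff distance to the convex hull** (Theorem 7.1 of
Fradelizi–Madiman–Marsiglietti–Zvavitch): for a compact convex body `K ⊆ ℝⁿ`
containing `0` in its interior, and nonempty compact sets `A, B ⊆ ℝⁿ`,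
`d^{(K)}(A + B) ≤ d^{(K)}(A) + d^{(K)}(B)`. -/
theorem distToConv_add_le {n : ℕ} (K : Set (EuclideanSpace ℝ (Fin n)))
    (hKcpt : IsCompact K) (hKconv : Convex ℝ K) (hK0 : (0 : EuclideanSpace ℝ (Fin n)) ∈ interior K)
    (A B : Set (EuclideanSpace ℝ (Fin n)))
    (hA : A.Nonempty) (hB : B.Nonempty) (hcA : IsCompact A) (hcB : IsCompact B) :
    distToConv K (A + B) ≤ distToConv K A + distToConv K B := by
  set SA := {r : ℝ | 0 < r ∧ convexHull ℝ A ⊆ A + r • K} with hSA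
  set SB := {r : ℝ | 0 < r ∧ convexHull ℝ B ⊆ B + r • K} with hSB
  set SAB := {r : ℝ | 0 < r ∧ convexHull ℝ (A + B) ⊆ (A + B) + r • K} with hSAB
  have hneA : SA.Nonempty := distToConv_set_nonempty K hK0 A hA hcA
  have hneB : SB.Nonempty := distToConv_set_nonempty K hK0 B hB hcB
  have hbddAB : BddBelow SAB := ⟨0, fun r hr => hr.1.le⟩
  have key : ∀ r ∈ SA, ∀ s ∈ SB, r + s ∈ SAB := by
    intro r hr s hs
    refine ⟨add_pos hr.1 hs.1, ?_⟩
    rw [convexHull_add, Convex.add_smul hKconv hr.1.le hs.1.le, add_add_add_comm]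
    exact Set.add_subset_add hr.2 hs.2
  have h1 : ∀ s ∈ SB, sInf SAB ≤ sInf SA + s := by
    intro s hs
    rw [← sub_le_iff_le_add]
    apply le_csInf hneA
    intro r hr
    rw [sub_le_iff_le_add]
    exact csInf_le hbddAB (key r hr s hs)
  have h2 : sInf SAB - sInf SA ≤ sInf SB := by
    apply le_csInf hneB
    intro s hs
    linarith [h1 s hs]
  show sInf SAB ≤ sInf SA + sInf SB
  linarith
end

section
/- Let K be a compact convex body in ℝⁿ containing 0 in its interior, and let A_1, …, A_k be nonempty compact sets in ℝⁿ with k ≥ n + 1. Then d^{(K)}(∑_{i ∈ [k]} A_i) ≤ max over subsets I ⊆ [k] with |I| = n of d^{(K)}(∑_{i ∈ I} A_i), and consequently d^{(K)}(∑_{i ∈ [k]} A_i) ≤ n · max_{i ∈ [k]} d^{(K)}(A_i). -/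
open MeasureTheory Finset
open scoped Pointwise

section SF

variable {n k : ℕ}

/-- **Shapley–Folkman lemma**. -/
lemma shapley_folkman (hk : 0 < k) (A : Fin k → Set (EuclideanSpace ℝ (Fin n)))
    {x : EuclideanSpace ℝ (Fin n)} (hx : x ∈ ∑ i, convexHull ℝ (A i)) :
    ∃ z : Fin k → EuclideanSpace ℝ (Fin n), (∀ i, z i ∈ convexHull ℝ (A i)) ∧ (∑ i, z i = x) ∧
      ∃ J : Finset (Fin k), J.card ≤ n ∧ ∀ i ∉ J, z i ∈ A i := by
  classical
  obtain ⟨y, hy, hyx⟩ := (Set.mem_fintype_sum _ _).1 hx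
  have hk0 : (k : ℝ) ≠ 0 := Nat.cast_ne_zero.2 hk.ne'
  set φ : Fin k → (EuclideanSpace ℝ (Fin n)) → (EuclideanSpace ℝ (Fin n)) × (Fin k → ℝ) :=
    fun i a => ((k : ℝ) • a, Pi.single i 1) with hφ
  set B : Set ((EuclideanSpace ℝ (Fin n)) × (Fin k → ℝ)) := ⋃ i, φ i '' A i with hB
  -- each φ i maps convex hulls into the hull of B
  have key : ∀ i, φ i '' (convexHull ℝ (A i)) ⊆ convexHull ℝ B := by
    intro i
    have haff : ∃ f : (EuclideanSpace ℝ (Fin n)) →ᵃ[ℝ] (EuclideanSpace ℝ (Fin n)) × (Fin k → ℝ),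
        ⇑f = φ i := by
      refine ⟨{ toFun := φ i
                linear := LinearMap.prod ((k : ℝ) • LinearMap.id) 0
                map_vadd' := ?_ }, rfl⟩
      intro p v
      simp only [hφ, vadd_eq_add, LinearMap.prod_apply, Pi.prod, LinearMap.smul_apply,
        LinearMap.id_coe, id_eq, LinearMap.zero_apply, Prod.mk_add_mk, smul_add]
      simp [Prod.ext_iff]
    obtain ⟨f, hf⟩ := haff
    rw [← hf, f.image_convexHull]
    exact convexHull_mono (by rw [hf]; exact Set.subset_iUnion (fun j => φ j '' A j) i)
  have hyB : ∀ i, φ i (y i) ∈ convexHull ℝ B := fun i =>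
    key i ⟨y i, hy i, rfl⟩
  -- the lifted point
  set p : (EuclideanSpace ℝ (Fin n)) × (Fin k → ℝ) := (x, fun _ => (k : ℝ)⁻¹) with hp
  have hpsum : p = ∑ i, (k : ℝ)⁻¹ • φ i (y i) := by
    have h1 : (∑ i, (k : ℝ)⁻¹ • φ i (y i)).1 = ∑ i, (k : ℝ)⁻¹ • ((k : ℝ) • y i) := by
      rw [Prod.fst_sum]
      exact Finset.sum_congr rfl fun c _ => rfl
    have h2 : (∑ i, (k : ℝ)⁻¹ • φ i (y i)).2 = ∑ i, (k : ℝ)⁻¹ • (Pi.single i 1 : Fin k → ℝ) := by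
      rw [Prod.snd_sum]
      exact Finset.sum_congr rfl fun c _ => rfl
    refine Prod.ext ?_ ?_
    · rw [h1]
      simp only [smul_smul, inv_mul_cancel₀ hk0, one_smul]
      exact hyx.symm
    · rw [h2]
      funext j
      simp only [Finset.sum_apply, Pi.smul_apply, Pi.single_apply, smul_eq_mul, mul_ite,
        mul_one, mul_zero]
      simp [Finset.sum_ite_eq]
      rfl
  have hpB : p ∈ convexHull ℝ B := by
    rw [hpsum]
    refine (convex_convexHull ℝ B).sum_mem (fun i _ => by positivity) ?_ (fun i _ => hyB i)
    simp [Finset.sum_const, Finset.card_univ, nsmul_eq_mul, mul_inv_cancel₀ hk0]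
  -- Carathéodory
  rw [convexHull_eq_union] at hpB
  simp only [Set.mem_iUnion] at hpB
  obtain ⟨t, htB, hai, hpt⟩ := hpB
  -- the linear functional summing the last k coordinates
  set L : ((EuclideanSpace ℝ (Fin n)) × (Fin k → ℝ)) →ₗ[ℝ] ℝ :=
    (∑ j : Fin k, LinearMap.proj j) ∘ₗ (LinearMap.snd ℝ _ _) with hL
  have hLval : ∀ q : (EuclideanSpace ℝ (Fin n)) × (Fin k → ℝ), L q = ∑ j, q.2 j := by
    intro q; simp [hL, LinearMap.sum_apply]
  have hLB : ∀ q ∈ B, L q = 1 := by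
    intro q hq
    rw [hB] at hq
    simp only [Set.mem_iUnion, Set.mem_image] at hq
    obtain ⟨i, a, _, rfl⟩ := hq
    rw [hLval]
    simp [hφ, Finset.sum_pi_single']
  -- cardinality bound
  have hcard : t.card ≤ n + k := by
    have h1 : vectorSpan ℝ (Set.range ((↑) : t → (EuclideanSpace ℝ (Fin n)) × (Fin k → ℝ))) ≤
        LinearMap.ker L := by
      rw [Subtype.range_coe, vectorSpan_def, Submodule.span_le]
      rintro v ⟨q1, hq1, q2, hq2, rfl⟩
      simp only [SetLike.mem_coe, LinearMap.mem_ker, vsub_eq_sub, map_sub]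
      rw [hLB _ (htB hq1), hLB _ (htB hq2), sub_self]
    have hsurj : Function.Surjective L := by
      intro c
      refine ⟨(0, fun _ => c / k), ?_⟩
      rw [hLval]
      simp only [Finset.sum_const, Finset.card_univ, Fintype.card_fin, nsmul_eq_mul]
      field_simp
    have hrn := LinearMap.finrank_range_add_finrank_ker L
    rw [LinearMap.range_eq_top.2 hsurj, finrank_top, Module.finrank_self] at hrn
    have hF : Module.finrank ℝ ((EuclideanSpace ℝ (Fin n)) × (Fin k → ℝ)) = n + k := by
      rw [Module.finrank_prod, finrank_euclideanSpace_fin]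
      simp [Module.finrank_pi]
    rw [hF] at hrn
    have h3 := hai.card_le_finrank_succ
    rw [Fintype.card_coe] at h3
    have h4 := Submodule.finrank_mono h1
    omega
  -- convex combination representation
  rw [Finset.convexHull_eq] at hpt
  obtain ⟨w, hw0, hw1, hwp⟩ := hpt
  rw [Finset.centerMass_eq_of_sum_1 _ _ hw1] at hwp
  simp only [id_eq] at hwp
  -- tagging
  have htagex : ∀ q ∈ t, ∃ i, q.2 = Pi.single i 1 ∧ (k : ℝ)⁻¹ • q.1 ∈ A i := by
    intro q hq
    have := htB hq
    rw [hB] at this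
    simp only [Set.mem_iUnion, Set.mem_image] at this
    obtain ⟨i, a, ha, rfl⟩ := this
    exact ⟨i, rfl, by
      simp only [hφ, smul_smul, inv_mul_cancel₀ hk0, one_smul]; exact ha⟩
  haveI : Nonempty (Fin k) := ⟨⟨0, hk⟩⟩
  choose! tag htag1 htag2 using htagex
  -- fiber weight sums
  have hwsum : ∀ i, ∑ q ∈ t.filter (fun q => tag q = i), w q = (k : ℝ)⁻¹ := by
    intro i
    have h2 := congrArg Prod.snd hwp
    rw [Prod.snd_sum] at h2
    have h3 := congrFun h2 i
    rw [Finset.sum_apply] at h3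
    rw [Finset.sum_filter]
    refine Eq.trans (Finset.sum_congr rfl fun q hq => ?_) h3
    simp only [Prod.smul_snd, Pi.smul_apply, htag1 q hq, Pi.single_apply, smul_eq_mul]
    by_cases h : tag q = i
    · simp [h]
    · simp [h, Ne.symm h]
  have hfibne : ∀ i, (t.filter (fun q => tag q = i)).Nonempty := by
    intro i
    rw [Finset.nonempty_iff_ne_empty]
    intro hemp
    have := hwsum i
    rw [hemp, Finset.sum_empty] at this
    exact (inv_ne_zero hk0) this.symm
  -- define z
  set z : Fin k → EuclideanSpace ℝ (Fin n) :=
    fun i => ∑ q ∈ t.filter (fun q => tag q = i), ((k : ℝ) * w q) • ((k : ℝ)⁻¹ • q.1) with hz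
  have hz_eq : ∀ i, z i = ∑ q ∈ t.filter (fun q => tag q = i), w q • q.1 := by
    intro i
    refine Finset.sum_congr rfl fun q hq => ?_
    rw [smul_smul]
    congr 1
    field_simp
  refine ⟨z, ?_, ?_, ?_⟩
  · -- z i in convex hull of A i
    intro i
    refine (convex_convexHull ℝ (A i)).sum_mem (fun q hq => ?_) ?_ (fun q hq => ?_)
    · have := hw0 q (Finset.mem_of_mem_filter q hq)
      positivity
    · rw [← Finset.mul_sum, hwsum i, mul_inv_cancel₀ hk0]
    · refine subset_convexHull ℝ (A i) ?_
      have h1 := htag2 q (Finset.mem_of_mem_filter q hq)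
      rwa [(Finset.mem_filter.1 hq).2] at h1
  · -- sum is x
    have h1 : ∑ i, z i = ∑ q ∈ t, w q • q.1 := by
      simp only [hz_eq]
      exact Finset.sum_fiberwise t tag (fun q => w q • q.1)
    rw [h1]
    have h2 := congrArg Prod.fst hwp
    rw [Prod.fst_sum] at h2
    exact h2
  · -- cardinality of bad set
    refine ⟨Finset.univ.filter (fun i => z i ∉ A i), ?_, fun i hi => by
      by_contra hno
      exact hi (Finset.mem_filter.2 ⟨Finset.mem_univ _, hno⟩)⟩
    set bigs : Finset (Fin k) :=
      Finset.univ.filter (fun i => 2 ≤ (t.filter (fun q => tag q = i)).card) with hbigs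
    have hsubset : Finset.univ.filter (fun i => z i ∉ A i) ⊆ bigs := by
      intro i hi
      rw [Finset.mem_filter] at hi
      rw [hbigs, Finset.mem_filter]
      refine ⟨Finset.mem_univ _, ?_⟩
      by_contra hc
      push_neg at hc
      interval_cases h : (t.filter (fun q => tag q = i)).card
      · exact absurd (Finset.card_eq_zero.1 h)
          (Finset.nonempty_iff_ne_empty.1 (hfibne i))
      · obtain ⟨q, hq⟩ := Finset.card_eq_one.1 h
        have hqmem : q ∈ t.filter (fun q => tag q = i) := by
          rw [hq]; exact Finset.mem_singleton_self q
        have hwq : w q = (k : ℝ)⁻¹ := by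
          have := hwsum i
          rwa [hq, Finset.sum_singleton] at this
        have hzi : z i = (k : ℝ)⁻¹ • q.1 := by
          rw [show z i = ∑ q ∈ t.filter (fun q => tag q = i),
              ((k : ℝ) * w q) • ((k : ℝ)⁻¹ • q.1) from rfl,
            hq, Finset.sum_singleton, hwq, mul_inv_cancel₀ hk0, one_smul]
        have h1 := htag2 q (Finset.mem_of_mem_filter q hqmem)
        rw [(Finset.mem_filter.1 hqmem).2] at h1
        rw [← hzi] at h1
        exact hi.2 h1
    refine (Finset.card_le_card hsubset).trans ?_
    -- card bigs ≤ n
    have hcardsum : ∑ i, (t.filter (fun q => tag q = i)).card = t.card :=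
      (Finset.card_eq_sum_card_fiberwise (fun q _ => Finset.mem_univ (tag q))).symm
    have hge : k + bigs.card ≤ ∑ i, (t.filter (fun q => tag q = i)).card := by
      have hstep : ∀ i : Fin k, 1 + (if i ∈ bigs then 1 else 0) ≤
          (t.filter (fun q => tag q = i)).card := by
        intro i
        by_cases h : i ∈ bigs
        · rw [if_pos h]
          have := (Finset.mem_filter.1 (hbigs ▸ h)).2
          omega
        · rw [if_neg h]
          have := Finset.card_pos.2 (hfibne i)
          omega
      calc k + bigs.card = ∑ i : Fin k, (1 + if i ∈ bigs then 1 else 0) := by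
            rw [Finset.sum_add_distrib, Finset.sum_const, Finset.card_univ, Fintype.card_fin,
              smul_eq_mul, mul_one]
            congr 1
            rw [Finset.sum_ite_mem, Finset.univ_inter, Finset.sum_const, smul_eq_mul, mul_one]
        _ ≤ _ := Finset.sum_le_sum fun i _ => hstep i
    omega

end SF

section DistLemmas

variable {n : ℕ} {K : Set (EuclideanSpace ℝ (Fin n))}

lemma distToConv_nonneg (K A : Set (EuclideanSpace ℝ (Fin n))) : 0 ≤ distToConv K A :=
  Real.sInf_nonneg fun _ hx => hx.1.le

lemma exists_cover (hK0 : (0 : EuclideanSpace ℝ (Fin n)) ∈ interior K)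
    {C : Set (EuclideanSpace ℝ (Fin n))} (hC : IsCompact C) (hCne : C.Nonempty) :
    ∃ r : ℝ, 0 < r ∧ convexHull ℝ C ⊆ C + r • K := by
  obtain ⟨c, hc⟩ := hCne
  obtain ⟨δ, hδ, hδK⟩ := Metric.mem_nhds_iff.1 (mem_interior_iff_mem_nhds.1 hK0)
  obtain ⟨R, hR, hRs⟩ := (isBounded_convexHull.2 hC.isBounded).subset_ball_lt 0 c
  refine ⟨R / δ, by positivity, fun x hx => ?_⟩
  have hxc : ‖x - c‖ < R := by
    have := hRs hx
    rwa [Metric.mem_ball, dist_eq_norm] at this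
  have hmem : (δ / R) • (x - c) ∈ K := by
    apply hδK
    rw [Metric.mem_ball, dist_zero_right, norm_smul, Real.norm_eq_abs,
      abs_of_pos (by positivity : (0:ℝ) < δ / R)]
    calc δ / R * ‖x - c‖ < δ / R * R := by
          exact mul_lt_mul_of_pos_left hxc (by positivity)
      _ = δ := by field_simp
  have hxm : x = c + (R / δ) • ((δ / R) • (x - c)) := by
    rw [smul_smul]
    rw [show R / δ * (δ / R) = 1 by field_simp]
    rw [one_smul]
    abel
  rw [hxm]
  exact Set.add_mem_add hc (Set.smul_mem_smul_set hmem)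

lemma cover_of_lt (hKconv : Convex ℝ K)
    (hK0 : (0 : EuclideanSpace ℝ (Fin n)) ∈ interior K)
    {C : Set (EuclideanSpace ℝ (Fin n))} (hC : IsCompact C) (hCne : C.Nonempty)
    {r : ℝ} (h : distToConv K C < r) :
    0 < r ∧ convexHull ℝ C ⊆ C + r • K := by
  have hK0m : (0 : EuclideanSpace ℝ (Fin n)) ∈ K := interior_subset hK0
  obtain ⟨r₀, hr₀, hcov⟩ := exists_cover hK0 hC hCne
  have hSne : {r : ℝ | 0 < r ∧ convexHull ℝ C ⊆ C + r • K}.Nonempty := ⟨r₀, hr₀, hcov⟩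
  obtain ⟨s, hs, hsr⟩ := exists_lt_of_csInf_lt hSne h
  have hrpos : 0 < r := hs.1.trans hsr
  refine ⟨hrpos, hs.2.trans (Set.add_subset_add_left ?_)⟩
  rintro _ ⟨v, hv, rfl⟩
  have hmem : (s / r) • v ∈ K :=
    hKconv.smul_mem_of_zero_mem hK0m hv
      ⟨le_of_lt (div_pos hs.1 hrpos), by rw [div_le_one hrpos]; exact hsr.le⟩
  have heq : s • v = r • ((s / r) • v) := by
    rw [smul_smul]
    congr 1
    field_simp
  show s • v ∈ r • K
  rw [heq]
  exact Set.smul_mem_smul_set hmem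

lemma distToConv_le' {C : Set (EuclideanSpace ℝ (Fin n))} {M : ℝ} (hM : 0 ≤ M)
    (h : ∀ r, M < r → convexHull ℝ C ⊆ C + r • K) : distToConv K C ≤ M := by
  by_contra hlt
  push_neg at hlt
  have hmem : M + (distToConv K C - M) / 2 ∈
      {r : ℝ | 0 < r ∧ convexHull ℝ C ⊆ C + r • K} :=
    ⟨by linarith, h _ (by linarith)⟩
  have h2 : distToConv K C ≤ M + (distToConv K C - M) / 2 :=
    csInf_le ⟨0, fun x hx => hx.1.le⟩ hmem
  linarith

lemma sum_smul_set_eq (hKconv : Convex ℝ K) (hK0 : (0 : EuclideanSpace ℝ (Fin n)) ∈ K)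
    {ι : Type*} (I : Finset ι) (r : ι → ℝ) (hr : ∀ i ∈ I, 0 ≤ r i) :
    ∑ i ∈ I, r i • K = (∑ i ∈ I, r i) • K := by
  classical
  induction I using Finset.cons_induction with
  | empty => simp [Set.zero_smul_set ⟨0, hK0⟩]
  | cons a s ha ih =>
    rw [Finset.sum_cons, Finset.sum_cons,
      ih (fun i hi => hr i (Finset.mem_cons_of_mem hi)),
      hKconv.add_smul (hr a (Finset.mem_cons_self a s))
        (Finset.sum_nonneg fun i hi => hr i (Finset.mem_cons_of_mem hi))]

lemma sum_sets_mono {ι : Type*} (I : Finset ι)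
    {f g : ι → Set (EuclideanSpace ℝ (Fin n))} (h : ∀ i ∈ I, f i ⊆ g i) :
    ∑ i ∈ I, f i ⊆ ∑ i ∈ I, g i := by
  classical
  induction I using Finset.cons_induction with
  | empty => simp
  | cons a s ha ih =>
    rw [Finset.sum_cons, Finset.sum_cons]
    exact Set.add_subset_add (h a (Finset.mem_cons_self a s))
      (ih fun i hi => h i (Finset.mem_cons_of_mem hi))

lemma isCompact_finset_sum {ι : Type*} (I : Finset ι)
    {f : ι → Set (EuclideanSpace ℝ (Fin n))} (h : ∀ i, IsCompact (f i)) :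
    IsCompact (∑ i ∈ I, f i) := by
  classical
  induction I using Finset.cons_induction with
  | empty =>
    rw [Finset.sum_empty]
    exact isCompact_singleton
  | cons a s ha ih =>
    rw [Finset.sum_cons]
    exact (h a).add ih

lemma nonempty_finset_sum {ι : Type*} (I : Finset ι)
    {f : ι → Set (EuclideanSpace ℝ (Fin n))} (h : ∀ i, (f i).Nonempty) :
    (∑ i ∈ I, f i).Nonempty := by
  choose g hg using h
  exact ⟨∑ i ∈ I, g i, Set.finset_sum_mem_finset_sum I f g fun i _ => hg i⟩

lemma distToConv_finset_sum_le (hKconv : Convex ℝ K)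
    (hK0 : (0 : EuclideanSpace ℝ (Fin n)) ∈ interior K)
    {ι : Type*} (I : Finset ι) (A : ι → Set (EuclideanSpace ℝ (Fin n)))
    (hne : ∀ i, (A i).Nonempty) (hcpt : ∀ i, IsCompact (A i)) :
    distToConv K (∑ i ∈ I, A i) ≤ ∑ i ∈ I, distToConv K (A i) := by
  classical
  have hK0m : (0 : EuclideanSpace ℝ (Fin n)) ∈ K := interior_subset hK0
  rcases I.eq_empty_or_nonempty with rfl | hI
  · simp only [Finset.sum_empty]
    refine distToConv_le' le_rfl fun r hr => ?_
    have h0 : (0 : Set (EuclideanSpace ℝ (Fin n))) = {0} := rfl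
    rw [h0, convexHull_singleton]
    intro x hx
    rw [Set.mem_singleton_iff] at hx
    subst hx
    exact Set.mem_add.2 ⟨0, Set.mem_singleton _, r • 0,
      Set.smul_mem_smul_set hK0m, by simp⟩
  · refine distToConv_le' (Finset.sum_nonneg fun i _ => distToConv_nonneg K (A i))
      fun r hr => ?_
    set S := ∑ i ∈ I, distToConv K (A i) with hS
    set ε := (r - S) / I.card with hε
    have hcard : (0 : ℝ) < I.card := by
      exact_mod_cast Finset.card_pos.2 hI
    have hεpos : 0 < ε := div_pos (by linarith) hcard
    have hsub : ∀ i ∈ I, convexHull ℝ (A i) ⊆ A i + (distToConv K (A i) + ε) • K :=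
      fun i _ => (cover_of_lt hKconv hK0 (hcpt i) (hne i) (by linarith)).2
    rw [convexHull_sum]
    calc ∑ i ∈ I, convexHull ℝ (A i)
        ⊆ ∑ i ∈ I, (A i + (distToConv K (A i) + ε) • K) := sum_sets_mono I hsub
      _ = (∑ i ∈ I, A i) + (∑ i ∈ I, (distToConv K (A i) + ε)) • K := by
          rw [Finset.sum_add_distrib,
            sum_smul_set_eq hKconv hK0m I _ fun i _ =>
              add_nonneg (distToConv_nonneg K (A i)) hεpos.le]
      _ = (∑ i ∈ I, A i) + r • K := by
          congr 2
          rw [Finset.sum_add_distrib, Finset.sum_const, nsmul_eq_mul, hε]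
          field_simp
          linarith [hS]

end DistLemmas

/-- **Corollary 7.5 of Fradelizi–Madiman–Marsiglietti–Zvavitch**: for a compact convex
body `K ⊆ ℝⁿ` with `0` in its interior and nonempty compact sets `A 1, …, A k ⊆ ℝⁿ`
with `k ≥ n + 1`, one has
`d^{(K)}(∑_{i ∈ [k]} A i) ≤ max_{I ⊆ [k], |I| = n} d^{(K)}(∑_{i ∈ I} A i)` and
consequently `d^{(K)}(∑_{i ∈ [k]} A i) ≤ n · max_{i ∈ [k]} d^{(K)}(A i)`
(maxima written as suprema over the corresponding finite nonempty index families). -/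
theorem distToConv_sum_le_max {n k : ℕ} (hk : n + 1 ≤ k)
    (K : Set (EuclideanSpace ℝ (Fin n)))
    (hKcpt : IsCompact K) (hKconv : Convex ℝ K)
    (hK0 : (0 : EuclideanSpace ℝ (Fin n)) ∈ interior K)
    (A : Fin k → Set (EuclideanSpace ℝ (Fin n)))
    (hne : ∀ i, (A i).Nonempty) (hcpt : ∀ i, IsCompact (A i)) :
    (distToConv K (∑ i, A i) ≤
        ⨆ I : {I : Finset (Fin k) // I.card = n},
          distToConv K (∑ i ∈ (I : Finset (Fin k)), A i)) ∧
      distToConv K (∑ i, A i) ≤ n * ⨆ i : Fin k, distToConv K (A i) := by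
  classical
  have hkpos : 0 < k := lt_of_lt_of_le (Nat.succ_pos n) hk
  have hnk : n ≤ k := le_trans (Nat.le_succ n) hk
  haveI : Nonempty {I : Finset (Fin k) // I.card = n} := by
    obtain ⟨I, _, hIcard⟩ := Finset.exists_subset_card_eq
      (show n ≤ (Finset.univ : Finset (Fin k)).card by simpa using hnk)
    exact ⟨⟨I, hIcard⟩⟩
  set M := ⨆ I : {I : Finset (Fin k) // I.card = n},
    distToConv K (∑ i ∈ (I : Finset (Fin k)), A i) with hM
  have hbdd : BddAbove (Set.range fun I : {I : Finset (Fin k) // I.card = n} =>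
      distToConv K (∑ i ∈ (I : Finset (Fin k)), A i)) :=
    Set.Finite.bddAbove (Set.finite_range _)
  have hM0 : 0 ≤ M :=
    le_trans (distToConv_nonneg _ _) (le_ciSup hbdd (Classical.arbitrary _))
  have part1 : distToConv K (∑ i, A i) ≤ M := by
    refine distToConv_le' hM0 fun r hr => ?_
    rw [convexHull_sum]
    intro x hx
    obtain ⟨z, hz, hzsum, J₀, hJ₀card, hJ₀⟩ := shapley_folkman hkpos A hx
    obtain ⟨J, hbadJ, hJcard⟩ := Finset.exists_superset_card_eq hJ₀card (by simpa using hnk)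
    have hJle : distToConv K (∑ i ∈ J, A i) ≤ M := le_ciSup hbdd ⟨J, hJcard⟩
    have hcov := (cover_of_lt hKconv hK0 (isCompact_finset_sum J hcpt)
      (nonempty_finset_sum J hne) (lt_of_le_of_lt hJle hr)).2
    have hmem : ∑ i ∈ J, z i ∈ convexHull ℝ (∑ i ∈ J, A i) := by
      rw [convexHull_sum]
      exact Set.finset_sum_mem_finset_sum J _ _ fun i _ => hz i
    obtain ⟨u, hu, v, hv, huv⟩ := hcov hmem
    have h2 : ∑ i ∈ Jᶜ, z i ∈ ∑ i ∈ Jᶜ, A i :=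
      Set.finset_sum_mem_finset_sum Jᶜ _ _ fun i hi =>
        hJ₀ i fun hmem => (Finset.mem_compl.1 hi) (hbadJ hmem)
    have hx' : x = (∑ i ∈ Jᶜ, z i + u) + v := by
      rw [← hzsum, ← Finset.sum_compl_add_sum J z, ← huv, add_assoc]
    rw [hx']
    have hsplit : (∑ i, A i) = (∑ i ∈ Jᶜ, A i) + ∑ i ∈ J, A i :=
      (Finset.sum_compl_add_sum J A).symm
    rw [hsplit]
    exact Set.add_mem_add (Set.add_mem_add h2 hu) hv
  have hbdd2 : BddAbove (Set.range fun i : Fin k => distToConv K (A i)) :=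
    Set.Finite.bddAbove (Set.finite_range _)
  refine ⟨part1, part1.trans (ciSup_le fun I => ?_)⟩
  calc distToConv K (∑ i ∈ (I : Finset (Fin k)), A i)
      ≤ ∑ i ∈ (I : Finset (Fin k)), distToConv K (A i) :=
        distToConv_finset_sum_le hKconv hK0 _ A hne hcpt
    _ ≤ ∑ _i ∈ (I : Finset (Fin k)), ⨆ j, distToConv K (A j) :=
        Finset.sum_le_sum fun i _ => le_ciSup hbdd2 i
    _ = n * ⨆ j, distToConv K (A j) := by
        rw [Finset.sum_const, I.2, nsmul_eq_mul]
end
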